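/- For every T > 0 and all x, y ∈ ℝ with x + y ≠ 0 one has (tanh(x/T) + tanh(y/T))/(x + y) < 2/(|x| + |y|). -/

import Mathlib

open Real

private lemma le_cosh_aux {t : ℝ} (ht : 0 ≤ t) : t ≤ Real.cosh t :=
  le_trans (Real.self_le_sinh_iff.2 ht) (Real.sinh_lt_cosh t).le

private lemma sinh_lt_mul_cosh_aux {d : ℝ} (hd : 0 < d) : Real.sinh d < d * Real.cosh d := by
  have h : StrictMonoOn (fun t => t * Real.cosh t - Real.sinh t) (Set.Ici (0:ℝ)) := by
    apply strictMonoOn_of_deriv_pos (convex_Ici 0)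
    · exact ((continuous_id.mul Real.continuous_cosh).sub Real.continuous_sinh).continuousOn
    · intro t ht
      rw [interior_Ici, Set.mem_Ioi] at ht
      have h1 : HasDerivAt (fun t : ℝ => t * Real.cosh t - Real.sinh t)
          (1 * Real.cosh t + t * Real.sinh t - Real.cosh t) t :=
        ((hasDerivAt_id t).mul (Real.hasDerivAt_cosh t)).sub (Real.hasDerivAt_sinh t)
      rw [h1.deriv]
      have hs : 0 < Real.sinh t := Real.sinh_pos_iff.2 ht
      nlinarith
  have := h Set.self_mem_Ici (Set.mem_Ici.2 hd.le) hd
  simp only [Real.cosh_zero, Real.sinh_zero, mul_one, zero_mul, sub_zero] at this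
  linarith

private lemma key_aux {d S : ℝ} (hd : 0 < d) (hdS : d ≤ S) :
    S * Real.sinh d < d * (Real.cosh S + Real.cosh d) := by
  have ht0 : (0:ℝ) ≤ S - d := by linarith
  have hcoshS : Real.cosh d * Real.cosh (S - d) ≤ Real.cosh S := by
    have hS : Real.cosh S = Real.cosh (d + (S - d)) := by ring_nf
    rw [hS, Real.cosh_add]
    nlinarith [Real.sinh_nonneg_iff.2 hd.le, Real.sinh_nonneg_iff.2 ht0]
  have hle : (S - d) ≤ Real.cosh (S - d) := le_cosh_aux ht0
  have hcd := Real.cosh_pos d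
  have hcsd := Real.cosh_pos (S - d)
  have hS0 : 0 < S := lt_of_lt_of_le hd hdS
  rcases le_total 1 d with h1 | h1
  · have hsc : Real.sinh d < Real.cosh d := Real.sinh_lt_cosh d
    have e1 : (S - d) * Real.sinh d ≤ (S - d) * Real.cosh d :=
      mul_le_mul_of_nonneg_left hsc.le ht0
    have e2 : (S - d) * Real.cosh d ≤ Real.cosh (S - d) * Real.cosh d :=
      mul_le_mul_of_nonneg_right hle hcd.le
    have e3 : Real.cosh (S - d) * Real.cosh d ≤ d * (Real.cosh (S - d) * Real.cosh d) :=
      le_mul_of_one_le_left (by positivity) h1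
    have e4 : d * (Real.cosh (S - d) * Real.cosh d) ≤ d * Real.cosh S := by
      apply mul_le_mul_of_nonneg_left _ hd.le
      nlinarith [hcoshS]
    have e5 : d * Real.sinh d < d * Real.cosh d := by
      exact mul_lt_mul_of_pos_left hsc hd
    nlinarith
  · have hsd : Real.sinh d < d * Real.cosh d := sinh_lt_mul_cosh_aux hd
    have hS1 : (S - 1) * Real.cosh d ≤ Real.cosh S := by
      rcases le_total S 1 with hs | hs
      · nlinarith [Real.cosh_pos S]
      · have h2 : S - 1 ≤ Real.cosh (S - d) := by linarith
        nlinarith [mul_le_mul_of_nonneg_right h2 hcd.le]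
    have e1 : S * Real.sinh d < S * (d * Real.cosh d) := mul_lt_mul_of_pos_left hsd hS0
    nlinarith [mul_le_mul_of_nonneg_left hS1 hd.le]

private lemma abs_add_abs_le_max_aux (u v : ℝ) : |u| + |v| ≤ max |u + v| |u - v| := by
  rcases le_total 0 u with hu | hu <;> rcases le_total 0 v with hv | hv
  · exact le_max_of_le_left (by rw [abs_of_nonneg hu, abs_of_nonneg hv,
      abs_of_nonneg (by linarith : (0:ℝ) ≤ u + v)])
  · exact le_max_of_le_right (by rw [abs_of_nonneg hu, abs_of_nonpos hv,
      abs_of_nonneg (by linarith : (0:ℝ) ≤ u - v)]; ring_nf; rfl)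
  · exact le_max_of_le_right (by rw [abs_of_nonpos hu, abs_of_nonneg hv,
      abs_of_nonpos (by linarith : u - v ≤ 0)]; ring_nf; rfl)
  · exact le_max_of_le_left (by rw [abs_of_nonpos hu, abs_of_nonpos hv,
      abs_of_nonpos (by linarith : u + v ≤ 0)]; ring_nf; rfl)

private lemma core_aux (u v : ℝ) (huv : 0 < u + v) :
    (Real.tanh u + Real.tanh v) / (u + v) < 2 / (|u| + |v|) := by
  have hcu := Real.cosh_pos u
  have hcv := Real.cosh_pos v
  have hM : 0 < |u| + |v| := lt_of_lt_of_le (abs_pos.2 huv.ne') (abs_add_le u v)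
  rw [div_lt_div_iff₀ huv hM]
  have hts : Real.tanh u + Real.tanh v = Real.sinh (u + v) / (Real.cosh u * Real.cosh v) := by
    rw [Real.tanh_eq_sinh_div_cosh, Real.tanh_eq_sinh_div_cosh,
      div_add_div _ _ hcu.ne' hcv.ne', Real.sinh_add]
  rw [hts, div_mul_eq_mul_div, div_lt_iff₀ (by positivity)]
  have hcc : 2 * (Real.cosh u * Real.cosh v) = Real.cosh (u + v) + Real.cosh (u - v) := by
    rw [Real.cosh_add, Real.cosh_sub]; ring
  have hmax := abs_add_abs_le_max_aux u v
  have hsp : 0 < Real.sinh (u + v) := Real.sinh_pos_iff.2 huv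
  rcases le_or_gt |u - v| (u + v) with h | h
  · have hMs : |u| + |v| ≤ u + v := le_trans hmax (max_le (le_of_eq (abs_of_pos huv)) h)
    have hsc := Real.sinh_lt_cosh (u + v)
    have hcq := Real.cosh_pos (u - v)
    nlinarith [mul_le_mul_of_nonneg_left hMs hsp.le, mul_lt_mul_of_pos_right hsc huv,
      mul_pos huv hcq]
  · have hMq : |u| + |v| ≤ |u - v| :=
      le_trans hmax (max_le (le_trans (le_of_eq (abs_of_pos huv)) h.le) le_rfl)
    have hk := key_aux huv h.le
    rw [Real.cosh_abs] at hk
    nlinarith [mul_le_mul_of_nonneg_left hMq hsp.le]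

theorem tanh_sum_div_lt (T : ℝ) (hT : 0 < T) (x y : ℝ) (hxy : x + y ≠ 0) :
    (Real.tanh (x / T) + Real.tanh (y / T)) / (x + y) < 2 / (|x| + |y|) := by
  suffices H : ∀ a b : ℝ, 0 < a + b →
      (Real.tanh (a / T) + Real.tanh (b / T)) / (a + b) < 2 / (|a| + |b|) by
    rcases hxy.lt_or_gt with hneg | hpos
    · have h := H (-x) (-y) (by linarith)
      rw [neg_div, neg_div, Real.tanh_neg, Real.tanh_neg, abs_neg, abs_neg] at h
      have e : (-Real.tanh (x / T) + -Real.tanh (y / T)) / (-x + -y) =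
          (Real.tanh (x / T) + Real.tanh (y / T)) / (x + y) := by
        rw [← neg_add, ← neg_add, neg_div_neg_eq]
      rwa [e] at h
    · exact H x y hpos
  intro a b hab
  have hs : a / T + b / T = (a + b) / T := (add_div a b T).symm
  have h := core_aux (a / T) (b / T) (by rw [hs]; positivity)
  have habs : |a / T| + |b / T| = (|a| + |b|) / T := by
    rw [abs_div, abs_div, abs_of_pos hT, ← add_div]
  rw [hs, habs, div_div_eq_mul_div, div_div_eq_mul_div, mul_div_right_comm,
    mul_div_right_comm] at h
  exact (mul_lt_mul_iff_left₀ hT).mp h
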